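/- Fix s ≥ 0. Define a_0 and a_s as the meta-Fibonacci sequences with a_t(n)=1 for 0 ≤ n ≤ t+1, a_t(t+2)=2, and a_t(n) = a_t(n-t-a_t(n-1)) + a_t(n-t-1-a_t(n-2)) for n > t+2 (for t ∈ {0, s}). Then for all h ≥ 1: a_s(n) = a_0(n - s·h) whenever 2^h + (s-1)h + 1 ≤ n ≤ 2^(h+1) + (s-1)h - 1, and a_s(n) = 2^(h-1) whenever 2^h + (s-1)h - s + 1 ≤ n ≤ 2^h + (s-1)h. -/

import Mathlib

def FJ (s : ℕ) : ℕ → ℕ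
  | 0 => 0
  | (m+1) => FJ s ((m+1)/2) + (m+1) + s
decreasing_by omega

def LJ : ℕ → ℕ
  | 0 => 0
  | (m+1) => LJ ((m+1)/2) + 1
decreasing_by omega

def UJ (s x : ℕ) : ℕ := Nat.findGreatest (fun m => FJ s m ≤ x) x

lemma FJ_zero (s : ℕ) : FJ s 0 = 0 := by simp [FJ]

lemma FJ_of_pos (s m : ℕ) (h : 0 < m) : FJ s m = FJ s (m/2) + m + s := by
  obtain ⟨m, rfl⟩ := Nat.exists_eq_succ_of_ne_zero h.ne'
  rw [FJ]

lemma FJ_one (s : ℕ) : FJ s 1 = 1 + s := by rw [FJ_of_pos s 1 (by omega)]; norm_num [FJ]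

lemma FJ_lt_succ (s : ℕ) : ∀ m, FJ s m < FJ s (m+1) := by
  intro m
  induction m using Nat.strong_induction_on with
  | _ m ih =>
    cases m with
    | zero => rw [FJ_one]; norm_num [FJ]
    | succ m =>
      rcases Nat.even_or_odd (m+1) with he | ho
      · have h1 : (m+2)/2 = (m+1)/2 := by obtain ⟨t, ht⟩ := he; omega
        rw [FJ_of_pos s (m+1) (by omega), FJ_of_pos s (m+2) (by omega), h1]
        omega
      · have h1 : (m+2)/2 = (m+1)/2 + 1 := by
          obtain ⟨k, hk⟩ := ho; omega
        have h2 := ih ((m+1)/2) (by omega)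
        rw [FJ_of_pos s (m+1) (by omega), FJ_of_pos s (m+2) (by omega), h1]
        omega

lemma FJ_mono (s : ℕ) : StrictMono (FJ s) := strictMono_nat_of_lt_succ (FJ_lt_succ s)

lemma FJ_ge (s m : ℕ) : m ≤ FJ s m := by
  cases m with
  | zero => simp [FJ]
  | succ m => rw [FJ_of_pos s (m+1) (by omega)]; omega

lemma UJ_ge (s x m : ℕ) (h : FJ s m ≤ x) : m ≤ UJ s x :=
  Nat.le_findGreatest (le_trans (FJ_ge s m) h) h

lemma UJ_spec (s x : ℕ) : FJ s (UJ s x) ≤ x := by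
  unfold UJ
  exact Nat.findGreatest_spec (P := fun m => FJ s m ≤ x) (Nat.zero_le x) (by simp [FJ])

lemma UJ_lt (s x : ℕ) : x < FJ s (UJ s x + 1) := by
  by_contra h
  push_neg at h
  have := UJ_ge s x (UJ s x + 1) h
  omega

lemma UJ_eq (s x m : ℕ) (h1 : FJ s m ≤ x) (h2 : x < FJ s (m+1)) : UJ s x = m := by
  have ha := UJ_ge s x m h1
  have hb : UJ s x ≤ m := by
    by_contra hc
    push_neg at hc
    have h3 : FJ s (m+1) ≤ FJ s (UJ s x) := (FJ_mono s).monotone hc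
    have := UJ_spec s x
    omega
  omega

lemma UJ_eq_pred (s x m : ℕ) (hm : 1 ≤ m) (h1 : FJ s (m-1) ≤ x) (h2 : x < FJ s m) :
    UJ s x = m - 1 := by
  apply UJ_eq s x (m-1) h1
  rwa [Nat.sub_add_cancel hm]

lemma star (s x : ℕ) (hx : s + 2 ≤ x) :
    UJ s x = UJ s (x - s - 1 - UJ s (x-1)) + UJ s (x - s - 2 - UJ s (x-2)) + 1 := by
  have h1 : FJ s (UJ s x) ≤ x := UJ_spec s x
  have h2 : x < FJ s (UJ s x + 1) := UJ_lt s x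
  have hF1 : FJ s 1 = 1 + s := FJ_one s
  have hm1 : 1 ≤ UJ s x := UJ_ge s x 1 (by omega)
  set m := UJ s x with hm
  have hF2 : FJ s 2 = 3 + 2*s := by
    rw [FJ_of_pos s 2 (by omega), show (2:ℕ)/2 = 1 from rfl, FJ_one]; ring
  by_cases hm2 : m = 1
  · -- m = 1
    rw [hm2, show (1:ℕ)+1 = 2 from rfl] at h2
    have hx2 : x ≤ 2*s + 2 := by omega
    have hu1 : 1 ≤ UJ s (x-1) := UJ_ge s (x-1) 1 (by omega)
    have uA : UJ s (x - s - 1 - UJ s (x-1)) = 0 := by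
      apply UJ_eq
      · rw [FJ_zero]; omega
      · rw [show (0:ℕ)+1 = 1 from rfl, hF1]; omega
    have uB : UJ s (x - s - 2 - UJ s (x-2)) = 0 := by
      apply UJ_eq
      · rw [FJ_zero]; omega
      · rw [show (0:ℕ)+1 = 1 from rfl, hF1]; omega
    rw [uA, uB, hm2]
  · -- m ≥ 2
    have hm2' : 2 ≤ m := by omega
    set k := m/2 with hk
    have hk1 : 1 ≤ k := by omega
    have hFm : FJ s m = FJ s k + m + s := FJ_of_pos s m (by omega)
    have hkk : FJ s k < FJ s (k+1) := FJ_lt_succ s k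
    have hkk' : FJ s (k-1) < FJ s k := by
      have := FJ_lt_succ s (k-1); rwa [Nat.sub_add_cancel hk1] at this
    have hFgem : m ≤ FJ s m := FJ_ge s m
    have hr : x = FJ s m + (x - FJ s m) := by omega
    set r := x - FJ s m with hrdef
    have uA0 : UJ s (FJ s k) = k := UJ_eq s _ k (le_refl _) (FJ_lt_succ s k)
    rcases Nat.even_or_odd m with ⟨t, ht⟩ | ⟨t, ht⟩
    · -- m even, m = 2t, k = t
      have hkt : k = t := by omega
      have h12 : (m+1)/2 = k := by omega
      have hFm1 : FJ s (m+1) = FJ s k + (m+1) + s := by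
        rw [FJ_of_pos s (m+1) (by omega), h12]
      have hr0 : r = 0 := by omega
      have h12' : (m-1)/2 = k-1 := by omega
      have hFm' : FJ s (m-1) = FJ s (k-1) + (m-1) + s := by
        rw [FJ_of_pos s (m-1) (by omega), h12']
      have e1 : UJ s (x-1) = m-1 := UJ_eq_pred s (x-1) m (by omega) (by omega) (by omega)
      have e2 : UJ s (x-2) = m-1 := UJ_eq_pred s (x-2) m (by omega) (by omega) (by omega)
      have eA : x - s - 1 - (m-1) = FJ s k := by omega
      have eB : x - s - 2 - (m-1) = FJ s k - 1 := by omega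
      have uB : UJ s (FJ s k - 1) = k - 1 := by
        apply UJ_eq_pred s _ k hk1 (by omega)
        have := FJ_ge s k; omega
      rw [e1, e2, eA, eB, uA0, uB]
      omega
    · -- m odd, m = 2t+1, k = t
      have hkt : k = t := by omega
      have h12 : (m+1)/2 = k+1 := by omega
      have hFm1 : FJ s (m+1) = FJ s (k+1) + (m+1) + s := by
        rw [FJ_of_pos s (m+1) (by omega), h12]
      have h12' : (m-1)/2 = k := by omega
      have hFm' : FJ s (m-1) = FJ s k + (m-1) + s := by
        rw [FJ_of_pos s (m-1) (by omega), h12']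
      have hrb : r ≤ FJ s (k+1) - FJ s k := by omega
      by_cases hr2 : 2 ≤ r
      · have e1 : UJ s (x-1) = m := UJ_eq s (x-1) m (by omega) (by omega)
        have e2 : UJ s (x-2) = m := UJ_eq s (x-2) m (by omega) (by omega)
        have eA : x - s - 1 - m = FJ s k + (r-1) := by omega
        have eB : x - s - 2 - m = FJ s k + (r-2) := by omega
        have uA' : UJ s (FJ s k + (r-1)) = k := UJ_eq s _ k (by omega) (by omega)
        have uB' : UJ s (FJ s k + (r-2)) = k := UJ_eq s _ k (by omega) (by omega)
        rw [e1, e2, eA, eB, uA', uB']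
        omega
      · by_cases hr1 : r = 1
        · have e1 : UJ s (x-1) = m := UJ_eq s (x-1) m (by omega) (by omega)
          have e2 : UJ s (x-2) = m-1 := UJ_eq_pred s (x-2) m (by omega) (by omega) (by omega)
          have eA : x - s - 1 - m = FJ s k := by omega
          have eB : x - s - 2 - (m-1) = FJ s k := by omega
          rw [e1, e2, eA, eB, uA0]
          omega
        · have hr0 : r = 0 := by omega
          have hFm'' : FJ s (m-2) < FJ s (m-1) := by
            have := FJ_lt_succ s (m-2)
            rwa [show m-2+1 = m-1 by omega] at this
          have e1 : UJ s (x-1) = m-1 := UJ_eq_pred s (x-1) m (by omega) (by omega) (by omega)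
          have e2 : UJ s (x-2) = m-2 := by
            apply UJ_eq_pred s (x-2) (m-1) (by omega)
            · rw [show m-1-1 = m-2 by omega]; omega
            · omega
          have e2' : UJ s (x-2) = m-2 := by rw [e2]
          have eA : x - s - 1 - (m-1) = FJ s k := by omega
          have eB : x - s - 2 - (m-2) = FJ s k := by omega
          rw [e1, e2, eA, eB, uA0]
          omega

lemma FJ_ge' (s m : ℕ) (h : 1 ≤ m) : m + s ≤ FJ s m := by
  rw [FJ_of_pos s m h]; omega

lemma UJ_bound (s x : ℕ) : UJ s x = 0 ∨ UJ s x + s ≤ x := by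
  by_cases h : UJ s x = 0
  · exact Or.inl h
  · right
    have h1 := UJ_spec s x
    have h2 := FJ_ge' s (UJ s x) (by omega)
    omega

theorem thmGen (s : ℕ) (a : ℕ → ℕ) (hinit : ∀ n ≤ s + 1, a n = 1) (htwo : a (s + 2) = 2)
    (hrec : ∀ n, s + 2 < n → a n = a (n - s - a (n - 1)) + a (n - s - 1 - a (n - 2))) :
    ∀ n, a n = 1 + UJ s (n - 1) := by
  intro n
  induction n using Nat.strong_induction_on with
  | _ n ih =>
    have hF1 : FJ s 1 = 1 + s := FJ_one s
    have hF0 : FJ s 0 = 0 := FJ_zero s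
    have hF2 : FJ s 2 = 3 + 2*s := by
      rw [FJ_of_pos s 2 (by omega), show (2:ℕ)/2 = 1 from rfl, FJ_one]; ring
    rcases lt_trichotomy n (s+2) with hn | hn | hn
    · rw [hinit n (by omega)]
      have : UJ s (n-1) = 0 := UJ_eq s (n-1) 0 (by omega) (by rw [show (0:ℕ)+1 = 1 from rfl]; omega)
      omega
    · subst hn
      rw [htwo]
      have h' : UJ s (s+1) = 1 := UJ_eq s (s+1) 1 (by omega) (by rw [show (1:ℕ)+1 = 2 from rfl]; omega)
      have h'' : UJ s (s+2-1) = 1 := by rw [show s+2-1 = s+1 by omega]; exact h'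
      omega
    · -- n > s + 2
      set x := n - 1 with hxdef
      have hx : s + 2 ≤ x := by omega
      have e1 : a (n-1) = 1 + UJ s (x-1) := by
        rw [ih (n-1) (by omega), show n-1-1 = x-1 by omega]
      have e2 : a (n-2) = 1 + UJ s (x-2) := by
        rw [ih (n-2) (by omega), show n-2-1 = x-2 by omega]
      have hb1 := UJ_bound s (x-1)
      have hb2 := UJ_bound s (x-2)
      set u1 := UJ s (x-1) with hu1
      set u2 := UJ s (x-2) with hu2
      have hA : n - s - a (n-1) = x - s - u1 := by omega
      have hB : n - s - 1 - a (n-2) = x - s - 1 - u2 := by omega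
      have hAlt : x - s - u1 < n := by omega
      have hBlt : x - s - 1 - u2 < n := by omega
      have eA : a (x - s - u1) = 1 + UJ s (x - s - 1 - u1) := by
        rw [ih _ hAlt, show x - s - u1 - 1 = x - s - 1 - u1 by omega]
      have eB : a (x - s - 1 - u2) = 1 + UJ s (x - s - 2 - u2) := by
        rw [ih _ hBlt, show x - s - 1 - u2 - 1 = x - s - 2 - u2 by omega]
      have hst := star s x hx
      rw [← hu1, ← hu2] at hst
      rw [hrec n (by omega), hA, hB, eA, eB]
      omega

lemma LJ_zero : LJ 0 = 0 := by simp [LJ]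

lemma LJ_of_pos (m : ℕ) (h : 0 < m) : LJ m = LJ (m/2) + 1 := by
  obtain ⟨m, rfl⟩ := Nat.exists_eq_succ_of_ne_zero h.ne'
  rw [LJ]

lemma FJ_eq_FJ0 (s : ℕ) : ∀ m, FJ s m = FJ 0 m + s * LJ m := by
  intro m
  induction m using Nat.strong_induction_on with
  | _ m ih =>
    cases m with
    | zero => rw [FJ_zero, FJ_zero, LJ_zero]; ring
    | succ m =>
      rw [FJ_of_pos s (m+1) (by omega), FJ_of_pos 0 (m+1) (by omega),
        LJ_of_pos (m+1) (by omega), ih ((m+1)/2) (by omega)]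
      ring

lemma LJ_le (h : ℕ) : ∀ m, m < 2^h → LJ m ≤ h := by
  induction h with
  | zero => intro m hm; interval_cases m; rw [LJ_zero]
  | succ h ih =>
    intro m hm
    cases m with
    | zero => rw [LJ_zero]; omega
    | succ m =>
      rw [LJ_of_pos (m+1) (by omega)]
      have : (m+1)/2 < 2^h := by
        have : (2:ℕ)^(h+1) = 2 * 2^h := by ring
        omega
      have := ih _ this
      omega

lemma LJ_ge (h : ℕ) : ∀ m, 2^h ≤ m → h + 1 ≤ LJ m := by
  induction h with
  | zero =>
    intro m hm
    rw [LJ_of_pos m (by simp at hm; omega)]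
    omega
  | succ h ih =>
    intro m hm
    have h2 : (2:ℕ)^(h+1) = 2 * 2^h := by ring
    have hm0 : 0 < m := by have := Nat.one_le_two_pow (n := h+1); omega
    rw [LJ_of_pos m hm0]
    have : 2^h ≤ m/2 := by omega
    have := ih _ this
    omega

lemma FJ0_pow_sub_one : ∀ h, FJ 0 (2^h - 1) = 2^(h+1) - h - 2 := by
  intro h
  induction h with
  | zero => simpa using FJ_zero 0
  | succ h ih =>
    have h2 : (2:ℕ)^(h+1) = 2 * 2^h := by ring
    have h3 : (2:ℕ)^(h+2) = 4 * 2^h := by ring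
    have hp : (1:ℕ) ≤ 2^h := Nat.one_le_two_pow
    have hh : h < 2^h := Nat.lt_two_pow_self (n := h)
    have hdiv : (2^(h+1) - 1)/2 = 2^h - 1 := by omega
    rw [FJ_of_pos 0 (2^(h+1) - 1) (by omega), hdiv, ih]
    omega

lemma FJ0_pow : ∀ h, FJ 0 (2^h) = 2^(h+1) - 1 := by
  intro h
  induction h with
  | zero => rw [pow_zero, FJ_of_pos 0 1 (by omega)]; simpa using FJ_zero 0
  | succ h ih =>
    have h2 : (2:ℕ)^(h+1) = 2 * 2^h := by ring
    have h3 : (2:ℕ)^(h+2) = 4 * 2^h := by ring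
    have hp : (1:ℕ) ≤ 2^h := Nat.one_le_two_pow
    have hdiv : (2^(h+1))/2 = 2^h := by omega
    rw [FJ_of_pos 0 (2^(h+1)) (by omega), hdiv, ih]
    omega


/-- Lemma 3 of Jackson–Ruskey: relation between the meta-Fibonacci sequence a_s
    (s ≥ 0) and the Conolly sequence a_0.  For h ≥ 1:
    a_s(n) = a_0(n - s·h) whenever 2^h + (s-1)h + 1 ≤ n ≤ 2^(h+1) + (s-1)h - 1
    (expressed additively as 2^h + s·h + 1 ≤ n + h and n + h + 1 ≤ 2^(h+1) + s·h),
    and a_s(n) = 2^(h-1) whenever 2^h + (s-1)h - s + 1 ≤ n ≤ 2^h + (s-1)h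
    (expressed additively). -/
theorem meta_fibonacci_eq_conolly_shift (s : ℕ) (a0 as : ℕ → ℕ)
    (h00 : a0 0 = 1) (h01 : a0 1 = 1) (h02 : a0 2 = 2)
    (h0rec : ∀ n, 2 < n → a0 n = a0 (n - a0 (n - 1)) + a0 (n - 1 - a0 (n - 2)))
    (hsinit : ∀ n ≤ s + 1, as n = 1) (hstwo : as (s + 2) = 2)
    (hsrec : ∀ n, s + 2 < n →
      as n = as (n - s - as (n - 1)) + as (n - s - 1 - as (n - 2))) :
    ∀ h, 1 ≤ h →
      (∀ n, 2 ^ h + s * h + 1 ≤ n + h → n + h + 1 ≤ 2 ^ (h + 1) + s * h →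
        as n = a0 (n - s * h)) ∧
      (∀ n, 2 ^ h + s * h + 1 ≤ n + h + s → n + h ≤ 2 ^ h + s * h →
        as n = 2 ^ (h - 1)) := by
  have hA0 : ∀ n, a0 n = 1 + UJ 0 (n - 1) := by
    apply thmGen 0 a0
    · intro n hn; interval_cases n <;> assumption
    · exact h02
    · intro n hn
      have := h0rec n hn
      simpa using this
  have hAs : ∀ n, as n = 1 + UJ s (n - 1) := thmGen s as hsinit hstwo hsrec
  intro h hh
  have hpow1 : (1:ℕ) ≤ 2^h := Nat.one_le_two_pow
  have hhlt : h < 2^h := Nat.lt_two_pow_self (n := h)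
  have hpow2 : (2:ℕ)^(h+1) = 2 * 2^h := by ring
  constructor
  · -- Part A
    intro n hn1 hn2
    set w := n - s * h with hw
    have hwn : n = w + s * h := by omega
    have hwlb : 2^h - h + 1 ≤ w := by omega
    have hwub : w + h + 1 ≤ 2^(h+1) := by omega
    rw [hAs n, hA0 w]
    suffices hkey : UJ s (n - 1) = UJ 0 (w - 1) by rw [hkey]
    set M := UJ 0 (w - 1) with hM
    have hM1 : FJ 0 M ≤ w - 1 := UJ_spec 0 (w-1)
    have hM2 : w - 1 < FJ 0 (M+1) := UJ_lt 0 (w-1)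
    have hE1 : FJ 0 (2^h - 1) = 2^(h+1) - h - 2 := FJ0_pow_sub_one h
    have hE1' : FJ 0 (2^(h-1) - 1) = 2^h - h - 1 := by
      have := FJ0_pow_sub_one (h-1)
      rw [show h-1+1 = h by omega] at this
      rw [this]
      have : (2:ℕ)^(h-1) ≤ 2^h := Nat.pow_le_pow_right (by omega) (by omega)
      omega
    -- M ≤ 2^h - 1
    have hMle : M ≤ 2^h - 1 := by
      by_contra hc
      push_neg at hc
      have : FJ 0 (2^h - 1) < FJ 0 M := FJ_mono 0 hc
      omega
    have hLM : LJ M ≤ h := LJ_le h M (by omega)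
    -- 2^(h-1) ≤ M + 1
    have hMge : 2^(h-1) ≤ M + 1 := by
      by_contra hc
      push_neg at hc
      have : FJ 0 (M+1) ≤ FJ 0 (2^(h-1) - 1) := (FJ_mono 0).monotone (by omega)
      omega
    have hLM1 : h ≤ LJ (M+1) := by
      have := LJ_ge (h-1) (M+1) hMge
      omega
    apply UJ_eq
    · rw [FJ_eq_FJ0 s M]
      have : s * LJ M ≤ s * h := Nat.mul_le_mul_left s hLM
      omega
    · rw [FJ_eq_FJ0 s (M+1)]
      have : s * h ≤ s * LJ (M+1) := Nat.mul_le_mul_left s hLM1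
      omega
  · -- Part B
    intro n hn1 hn2
    rw [hAs n]
    by_cases h1 : h = 1
    · subst h1
      have : UJ s (n - 1) = 0 := by
        apply UJ_eq
        · rw [FJ_zero]; omega
        · rw [show (0:ℕ)+1 = 1 from rfl, FJ_one]; omega
      rw [this]
      simp
    · have hh2 : 2 ≤ h := by omega
      have hpowh1 : (2:ℕ)^h = 2 * 2^(h-1) := by
        rw [← pow_succ']
        congr 1
        omega
      have hpowh2 : (2:ℕ)^(h-1) = 2 * 2^(h-2) := by
        rw [← pow_succ']
        congr 1
        omega
      have hp1 : (1:ℕ) ≤ 2^(h-2) := Nat.one_le_two_pow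
      have hE1' : FJ 0 (2^(h-1) - 1) = 2^h - h - 1 := by
        have := FJ0_pow_sub_one (h-1)
        rw [show h-1+1 = h by omega] at this
        rw [this]
        omega
      have hE2' : FJ 0 (2^(h-1)) = 2^h - 1 := by
        have := FJ0_pow (h-1)
        rw [show h-1+1 = h by omega] at this
        rw [this]
      have hLa : LJ (2^(h-1) - 1) = h - 1 := by
        have l1 : LJ (2^(h-1) - 1) ≤ h - 1 := LJ_le (h-1) _ (by omega)
        have l2 : h - 2 + 1 ≤ LJ (2^(h-1) - 1) := LJ_ge (h-2) _ (by omega)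
        omega
      have hLb : LJ (2^(h-1)) = h := by
        have l1 : LJ (2^(h-1)) ≤ h := LJ_le h _ (by omega)
        have l2 : h - 1 + 1 ≤ LJ (2^(h-1)) := LJ_ge (h-1) _ (by omega)
        omega
      have key : UJ s (n - 1) = 2^(h-1) - 1 := by
        apply UJ_eq
        · rw [FJ_eq_FJ0 s _, hLa, hE1']
          have : s * (h-1) + s = s * h := by
            have : s * (h - 1 + 1) = s * (h-1) + s := by ring
            rw [show h - 1 + 1 = h by omega] at this
            omega
          omega
        · rw [show 2^(h-1) - 1 + 1 = 2^(h-1) by omega, FJ_eq_FJ0 s _, hLb, hE2']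
          omega
      rw [key]
      omega
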